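/- Let H be a real Hilbert space with dim H ≥ 2 and let m ≥ 3 be an integer. For an ordered family (C₁, …, C_m) of nonempty closed convex subsets of H with projections P₁, …, P_m, define the set of cycles cyc(C₁, …, C_m) := {(ȳ₁, …, ȳ_m) ∈ Hᵐ : ȳ₁ = P₁(ȳ₂), ȳ₂ = P₂(ȳ₃), …, ȳ_{m−1} = P_{m−1}(ȳ_m), ȳ_m = P_m(ȳ₁)}. Then there exists no function Φ : Hᵐ → ℝ such that for every ordered family (C₁, …, C_m) of nonempty closed convex subsets of H, cyc(C₁, …, C_m) equals the set of solutions of the variational problem: minimize Φ(y₁, …, y_m) subject to y₁ ∈ C₁, …, y_m ∈ C_m; i.e. such that cyc(C₁, …, C_m) = {(y₁, …, y_m) ∈ C₁ × ⋯ × C_m : Φ(y₁, …, y_m) ≤ Φ(z₁, …, z_m) for all (z₁, …, z_m) ∈ C₁ × ⋯ × C_m}. -/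

import Mathlib

/-- `P` is the metric (nearest-point) projection onto the set `C`. -/
def IsProjOn {H : Type*} [NormedAddCommGroup H] (P : H → H) (C : Set H) : Prop :=
  ∀ x : H, P x ∈ C ∧ ∀ y ∈ C, ‖x - P x‖ ≤ ‖x - y‖

section aux

open scoped Fin.NatCast

variable {H : Type*} [NormedAddCommGroup H] [InnerProductSpace ℝ H] [CompleteSpace H]
variable {m : ℕ} [NeZero m]

private lemma fin_two_ne_zero (hm : 3 ≤ m) : (2 : Fin m) ≠ 0 := by
  intro h2
  have h3 : ((2 : ℕ) : Fin m) = 0 := by rw [Nat.cast_ofNat]; exact h2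
  rw [Fin.natCast_eq_zero] at h3
  have := Nat.le_of_dvd (by norm_num) h3
  omega

private lemma fin_one_ne_zero (hm : 3 ≤ m) : (1 : Fin m) ≠ 0 := by
  intro h2
  have h3 : ((1 : ℕ) : Fin m) = 0 := by rw [Nat.cast_one]; exact h2
  rw [Fin.natCast_eq_zero] at h3
  have := Nat.le_of_dvd (by norm_num) h3
  omega

/-- Key step: if the set equality holds for all families, then replacing coordinate `j`
by the value of coordinate `j+1` strictly decreases `Φ` whenever they differ. -/
private lemma key_step (Φ : (Fin m → H) → ℝ)
    (hΦ : ∀ C : Fin m → Set H,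
        (∀ i, (C i).Nonempty) → (∀ i, IsClosed (C i)) → (∀ i, Convex ℝ (C i)) →
        ∀ P : Fin m → H → H, (∀ i, IsProjOn (P i) (C i)) →
          {y : Fin m → H | ∀ i : Fin m, y i = P i (y (i + 1))} =
          {y : Fin m → H | (∀ i, y i ∈ C i) ∧
            ∀ z : Fin m → H, (∀ i, z i ∈ C i) → Φ y ≤ Φ z})
    (hm : 3 ≤ m) (a : Fin m → H) (j : Fin m) (hne : a j ≠ a (j + 1)) :
    Φ (Function.update a j (a (j + 1))) < Φ a := by
  classical
  set C : Fin m → Set H := fun i => if i = j then Set.univ else {a i} with hC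
  set P : Fin m → H → H := fun i x => if i = j then x else a i with hP
  have hCne : ∀ i, (C i).Nonempty := by
    intro i; simp only [hC]; split <;> simp
  have hCcl : ∀ i, IsClosed (C i) := by
    intro i; simp only [hC]; split
    · exact isClosed_univ
    · exact isClosed_singleton
  have hCcv : ∀ i, Convex ℝ (C i) := by
    intro i; simp only [hC]; split
    · exact convex_univ
    · exact convex_singleton _
  have hproj : ∀ i, IsProjOn (P i) (C i) := by
    intro i x
    simp only [hC, hP]
    split
    · simp
    · refine ⟨rfl, ?_⟩
      rintro y rfl; exact le_refl _
  have heq := hΦ C hCne hCcl hCcv P hproj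
  have hj1 : j + 1 ≠ j := by
    intro h
    exact fin_one_ne_zero hm (add_left_cancel (a := j) (c := 0) (by rw [add_zero]; exact h))
  -- the updated point is a cycle
  have hycyc : Function.update a j (a (j + 1)) ∈
      {y : Fin m → H | ∀ i : Fin m, y i = P i (y (i + 1))} := by
    intro i
    by_cases hij : i = j
    · subst hij
      simp only [hP, if_pos rfl, Function.update_self, Function.update_of_ne hj1]
    · simp only [hP, if_neg hij, Function.update_of_ne hij]
  rw [heq] at hycyc
  -- `a` is feasible but not a cycle
  have hafeas : ∀ i, a i ∈ C i := by
    intro i; simp only [hC]; split <;> simp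
  have hanotcyc : a ∉ {y : Fin m → H | ∀ i : Fin m, y i = P i (y (i + 1))} := by
    intro h
    have := h j
    simp only [hP, if_pos rfl] at this
    exact hne this
  rw [heq] at hanotcyc
  simp only [Set.mem_setOf_eq, not_and, not_forall] at hanotcyc
  obtain ⟨z, hz, hlt⟩ := hanotcyc hafeas
  have h1 : Φ (Function.update a j (a (j + 1))) ≤ Φ z := hycyc.2 z hz
  linarith [hycyc.2 z hz, hlt]

end aux

/-- Baillon–Combettes–Cominetti: for `dim H ≥ 2` and `m ≥ 3` there is no function
`Φ : Hᵐ → ℝ` such that, for every ordered family of nonempty closed convex subsets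
`(C₁, …, C_m)`, the set of cycles `cyc(C₁, …, C_m)` is the solution set of the problem of
minimizing `Φ` over `C₁ × ⋯ × C_m`.  (Indices are `0`-based with wrap-around: the cycle
conditions read `y i = P i (y (i+1))` for all `i : Fin m`.) -/
theorem stmt14 {H : Type*} [NormedAddCommGroup H] [InnerProductSpace ℝ H] [CompleteSpace H]
    (hdim : ∃ u v : H, LinearIndependent ℝ ![u, v])
    {m : ℕ} [NeZero m] (hm : 3 ≤ m) :
    ¬ ∃ Φ : (Fin m → H) → ℝ,
      ∀ C : Fin m → Set H,
        (∀ i, (C i).Nonempty) → (∀ i, IsClosed (C i)) → (∀ i, Convex ℝ (C i)) →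
        ∀ P : Fin m → H → H, (∀ i, IsProjOn (P i) (C i)) →
          {y : Fin m → H | ∀ i : Fin m, y i = P i (y (i + 1))} =
          {y : Fin m → H | (∀ i, y i ∈ C i) ∧
            ∀ z : Fin m → H, (∀ i, z i ∈ C i) → Φ y ≤ Φ z} := by
  classical
  rintro ⟨Φ, hΦ⟩
  obtain ⟨u, v, huv⟩ := hdim
  have hu : u ≠ 0 := by
    have := huv.ne_zero 0
    simpa using this
  -- basic Fin m arithmetic
  have h1ne : (1 : Fin m) ≠ 0 := fin_one_ne_zero hm
  have hadd1 : ∀ k : Fin m, k + 1 ≠ k := by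
    intro k h
    exact h1ne (add_left_cancel (a := k) (c := 0) (by rw [add_zero]; exact h))
  have hsub1 : ∀ k : Fin m, k - 1 ≠ k := by
    intro k h
    have : k - 1 + 1 = k + 1 := by rw [h]
    rw [sub_add_cancel] at this
    exact hadd1 k this.symm
  have haddsub : ∀ k : Fin m, k + 1 ≠ k - 1 := by
    intro k h
    apply fin_two_ne_zero hm
    have := sub_eq_zero_of_eq h
    open Fin.CommRing in rwa [show k + 1 - (k - 1) = 2 by ring] at this
  -- configurations: a single `u` at position k, intermediates with `u` at `k-1` and `k`
  set e : Fin m → Fin m → H := fun k i => if i = k then u else 0 with he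
  set g : Fin m → Fin m → H := fun k i => if i = k ∨ i = k - 1 then u else 0 with hg
  have step1 : ∀ k : Fin m, Φ (g k) < Φ (e k) := by
    intro k
    have h := key_step Φ hΦ hm (e k) (k - 1) ?_
    · have hupd : Function.update (e k) (k - 1) (e k (k - 1 + 1)) = g k := by
        funext i
        by_cases hik : i = k - 1
        · subst hik
          rw [Function.update_self]
          simp only [he, hg, sub_add_cancel, if_pos rfl, if_pos (Or.inr rfl)]
        · rw [Function.update_of_ne hik]
          simp only [he, hg]
          by_cases hik2 : i = k
          · simp [hik2]
          · simp [hik2, hik]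
      rwa [hupd] at h
    · simp only [he, sub_add_cancel, if_pos rfl, if_neg (hsub1 k)]
      exact fun h => hu h.symm
  have step2 : ∀ k : Fin m, Φ (e (k - 1)) < Φ (g k) := by
    intro k
    have h := key_step Φ hΦ hm (g k) k ?_
    · have hupd : Function.update (g k) k (g k (k + 1)) = e (k - 1) := by
        funext i
        have hk1 : g k (k + 1) = 0 := by
          simp only [hg]
          rw [if_neg]
          push_neg
          exact ⟨hadd1 k, haddsub k⟩
        by_cases hik : i = k
        · subst hik
          rw [Function.update_self, hk1]
          simp only [he]
          rw [if_neg (fun h => hsub1 i h.symm)]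
        · rw [Function.update_of_ne hik]
          simp only [he, hg]
          by_cases hik2 : i = k - 1
          · simp [hik2]
          · simp [hik, hik2]
      rwa [hupd] at h
    · simp only [hg, if_pos (Or.inl rfl)]
      rw [if_neg]
      · exact hu
      · push_neg
        exact ⟨hadd1 k, haddsub k⟩
  -- now Φ (e (k-1)) < Φ (e k) for all k, impossible on a finite cycle
  have hdec : ∀ k : Fin m, Φ (e k) < Φ (e (k + 1)) := by
    intro k
    have := lt_trans (step2 (k + 1)) (step1 (k + 1))
    rwa [add_sub_cancel_right] at this
  obtain ⟨k, hk⟩ := Finite.exists_max (fun k : Fin m => Φ (e k))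
  exact absurd (hk (k + 1)) (not_le.mpr (hdec k))
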